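/- The number of permutations in S_n with no decreasing subsequence of length 3 equals the n-th Catalan number C_n. -/

import Mathlib

open List Finset

namespace ThreeGood

/-- `l` has no decreasing subsequence of length 3. -/
def Av (l : List ℕ) : Prop :=
  ∀ x y z : ℕ, [x, y, z] <+ l → y < x → z < y → False

lemma Av.sublist {l t : List ℕ} (h : Av l) (ht : t <+ l) : Av t :=
  fun x y z hs h1 h2 => h x y z (hs.trans ht) h1 h2

lemma pair_sublist : ∀ (l : List ℕ) (i j : ℕ) (x y : ℕ), i < j →
    l[i]? = some x → l[j]? = some y → [x, y] <+ l := by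
  intro l
  induction l with
  | nil => intro i j x y _ h; simp at h
  | cons h t ih =>
    intro i j x y hij hx hy
    cases i with
    | zero =>
      simp only [getElem?_cons_zero, Option.some_inj] at hx
      subst hx
      obtain ⟨j', rfl⟩ := Nat.exists_eq_add_of_lt hij
      have : y ∈ t := mem_of_getElem? (by simpa using hy)
      exact (singleton_sublist.2 this).cons₂ _
    | succ i' =>
      cases j with
      | zero => omega
      | succ j' => exact (ih i' j' x y (by omega) (by simpa using hx) (by simpa using hy)).cons _

lemma triple_sublist : ∀ (l : List ℕ) (i j k : ℕ) (x y z : ℕ), i < j → j < k →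
    l[i]? = some x → l[j]? = some y → l[k]? = some z → [x, y, z] <+ l := by
  intro l
  induction l with
  | nil => intro i j k x y z _ _ h; simp at h
  | cons h t ih =>
    intro i j k x y z hij hjk hx hy hz
    cases i with
    | zero =>
      simp only [getElem?_cons_zero, Option.some_inj] at hx
      subst hx
      obtain ⟨j', rfl⟩ := Nat.exists_eq_add_of_lt hij
      obtain ⟨k', rfl⟩ := Nat.exists_eq_add_of_lt hjk
      refine (pair_sublist t j' (j' + k' + 1) y z (by omega) (by simpa using hy) ?_).cons₂ _
      rw [show (0 + j' + 1 + k' + 1) = (j' + k' + 1) + 1 from by omega] at hz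
      simpa using hz
    | succ i' =>
      cases j with
      | zero => omega
      | succ j' =>
        cases k with
        | zero => omega
        | succ k' =>
          exact (ih i' j' k' x y z (by omega) (by omega) (by simpa using hx)
            (by simpa using hy) (by simpa using hz)).cons _

lemma av_ofFn_iff {m : ℕ} (σ : Equiv.Perm (Fin m)) :
    Av (List.ofFn fun i => (σ i : ℕ)) ↔
      ¬ ∃ i j k : Fin m, i < j ∧ j < k ∧ σ j < σ i ∧ σ k < σ j := by
  constructor
  · rintro hav ⟨i, j, k, hij, hjk, h1, h2⟩
    refine hav (σ i) (σ j) (σ k) ?_ h1 h2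
    refine triple_sublist _ i j k _ _ _ hij hjk ?_ ?_ ?_ <;>
      simp [List.getElem?_ofFn, List.get_ofFn, Fin.is_lt]
  · rintro h x y z hs h1 h2
    rw [sublist_iff_exists_fin_orderEmbedding_get_eq] at hs
    obtain ⟨f, hf⟩ := hs
    have hlen : (List.ofFn fun i => (σ i : ℕ)).length = m := by simp
    have g : ∀ ix : Fin 3, True := fun _ => trivial
    refine h ⟨Fin.cast hlen (f ⟨0, by simp⟩), Fin.cast hlen (f ⟨1, by simp⟩),
      Fin.cast hlen (f ⟨2, by simp⟩), ?_, ?_, ?_, ?_⟩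
    · have := f.strictMono (show (⟨0, by simp⟩ : Fin ([x,y,z].length)) < ⟨1, by simp⟩ by
        simp [Fin.lt_def])
      simp [Fin.lt_def] at this ⊢
    · have := f.strictMono (show (⟨1, by simp⟩ : Fin ([x,y,z].length)) < ⟨2, by simp⟩ by
        simp [Fin.lt_def])
      simp [Fin.lt_def] at this ⊢
    · have e0 := hf ⟨0, by simp⟩
      have e1 := hf ⟨1, by simp⟩
      simp [List.get_ofFn] at e0 e1
      simp only [Fin.lt_def]
      rw [show ((σ (Fin.cast hlen (f ⟨1, by simp⟩)) : Fin m) : ℕ) = y from ?_,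
        show ((σ (Fin.cast hlen (f ⟨0, by simp⟩)) : Fin m) : ℕ) = x from ?_]
      · exact h1
      · rw [e0]; congr 1
      · rw [e1]; congr 1
    · have e1 := hf ⟨1, by simp⟩
      have e2 := hf ⟨2, by simp⟩
      simp [List.get_ofFn] at e1 e2
      simp only [Fin.lt_def]
      rw [show ((σ (Fin.cast hlen (f ⟨2, by simp⟩)) : Fin m) : ℕ) = z from ?_,
        show ((σ (Fin.cast hlen (f ⟨1, by simp⟩)) : Fin m) : ℕ) = y from ?_]
      · exact h2
      · rw [e1]; congr 1
      · rw [e2]; congr 1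


open scoped Classical in
/-- The 321-avoiding permutations of `range n`, as lists. -/
noncomputable def A (n : ℕ) : Finset (List ℕ) :=
  (List.range n).permutations.toFinset.filter Av

lemma mem_A {n : ℕ} {l : List ℕ} : l ∈ A n ↔ l ~ List.range n ∧ Av l := by
  classical
  simp [A, List.mem_permutations]

lemma length_of_mem_A {n : ℕ} {l : List ℕ} (h : l ∈ A n) : l.length = n := by
  simpa using (mem_A.1 h).1.length_eq

lemma nodup_of_mem_A {n : ℕ} {l : List ℕ} (h : l ∈ A n) : l.Nodup :=
  ((mem_A.1 h).1.nodup_iff).2 (List.nodup_range)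

lemma mem_iff_of_mem_A {n : ℕ} {l : List ℕ} (h : l ∈ A n) {x : ℕ} : x ∈ l ↔ x < n := by
  rw [(mem_A.1 h).1.mem_iff, List.mem_range]

/-- `l` has an increasing suffix of length `m`. -/
def StatGe (m : ℕ) (l : List ℕ) : Prop :=
  ∃ b : List ℕ, b <:+ l ∧ b.length = m ∧ List.Chain' (· < ·) b

lemma statGe_zero (l : List ℕ) : StatGe 0 l := ⟨[], nil_suffix, rfl, List.isChain_nil⟩

lemma StatGe.length_le {m : ℕ} {l : List ℕ} (h : StatGe m l) : m ≤ l.length := by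
  obtain ⟨b, hb, rfl, -⟩ := h
  exact hb.length_le

lemma chain'_of_suffix {b c : List ℕ} (h : List.Chain' (· < ·) c) (hb : b <:+ c) :
    List.Chain' (· < ·) b := by
  rw [List.Chain', List.isChain_iff_pairwise] at h ⊢
  exact h.sublist hb.sublist

lemma StatGe.mono {m k : ℕ} {l : List ℕ} (h : StatGe m l) (hk : k ≤ m) : StatGe k l := by
  obtain ⟨b, hb, rfl, hc⟩ := h
  refine ⟨b.drop (b.length - k), (drop_suffix _ _).trans hb, ?_, chain'_of_suffix hc (drop_suffix _ _)⟩
  rw [List.length_drop]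
  omega

lemma statGe_one {l : List ℕ} (h : l ≠ []) : StatGe 1 l := by
  obtain ⟨x, t, rfl⟩ := List.exists_cons_of_ne_nil h
  refine ⟨(x :: t).drop (t.length), drop_suffix _ _, ?_, ?_⟩
  · simp
  · have hlen : ((x :: t).drop t.length).length = 1 := by simp
    obtain ⟨y, hy⟩ := List.length_eq_one_iff.1 hlen
    rw [hy]
    exact List.isChain_singleton y

/-- The unique suffix of a given length. -/
lemma suffix_eq_drop {b l : List ℕ} (h : b <:+ l) : b = l.drop (l.length - b.length) :=
  suffix_iff_eq_drop.1 h

noncomputable def S (n m : ℕ) : ℕ := by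
  classical exact ((A n).filter (StatGe m)).card

noncomputable def cnt (n j : ℕ) : ℕ := by
  classical exact ((A n).filter (fun l => StatGe j l ∧ ¬ StatGe (j + 1) l)).card

lemma sublist_after (x : ℕ) : ∀ (a : List ℕ) {b s : List ℕ}, x ∉ a →
    x :: s <+ a ++ x :: b → s <+ b := by
  intro a
  induction a with
  | nil =>
    intro b s _ h
    cases h with
    | cons_cons _ h => exact h
    | cons _ h => exact (sublist_cons_self x s).trans h
  | cons y a' ih =>
    intro b s hx h
    cases h with
    | cons_cons _ h => exact absurd List.mem_cons_self hx
    | cons _ h => exact ih (fun hm => hx (List.mem_cons_of_mem _ hm)) h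

lemma insertIdx_append_cons (x : ℕ) : ∀ (a b : List ℕ),
    (a ++ b).insertIdx a.length x = a ++ x :: b := by
  intro a
  induction a with
  | nil => intro b; simp
  | cons y a' ih => intro b; simp [List.insertIdx_succ_cons, ih]

lemma perm_decomp_iff {n : ℕ} (a b : List ℕ) :
    a ++ n :: b ~ List.range (n + 1) ↔ a ++ b ~ List.range n := by
  have h1 : a ++ n :: b ~ n :: (a ++ b) := perm_middle
  have h2 : List.range (n + 1) ~ n :: List.range n := by
    rw [List.range_succ]; exact perm_append_singleton _ _
  constructor
  · intro h
    exact ((h1.symm.trans h).trans h2).cons_inv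
  · intro h
    exact h1.trans ((h.cons n).trans h2.symm)

lemma decomp_of_mem_A_succ {n : ℕ} {l : List ℕ} (h : l ∈ A (n + 1)) :
    ∃ a b : List ℕ, l = a ++ n :: b ∧ n ∉ a ∧ n ∉ b ∧
      (∀ x ∈ a, x < n) ∧ (∀ x ∈ b, x < n) := by
  have hn : n ∈ l := (mem_iff_of_mem_A h).2 (Nat.lt_succ_self n)
  obtain ⟨a, b, rfl⟩ := List.append_of_mem hn
  have hnd := nodup_of_mem_A h
  have hna : n ∉ a := by
    intro hmem
    exact (List.disjoint_of_nodup_append hnd) hmem List.mem_cons_self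
  have hnb : n ∉ b := by
    have := (List.nodup_append.1 hnd).2.1
    exact (List.nodup_cons.1 this).1
  refine ⟨a, b, rfl, hna, hnb, ?_, ?_⟩
  · intro x hx
    have : x < n + 1 := (mem_iff_of_mem_A h).1 (by simp [hx])
    rcases Nat.lt_succ_iff_lt_or_eq.1 this with h' | rfl
    · exact h'
    · exact absurd hx hna
  · intro x hx
    have : x < n + 1 := (mem_iff_of_mem_A h).1 (by simp [hx])
    rcases Nat.lt_succ_iff_lt_or_eq.1 this with h' | rfl
    · exact h'
    · exact absurd hx hnb

lemma chain'_b_of_av {n : ℕ} {a b : List ℕ} (hav : Av (a ++ n :: b))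
    (hnd : (a ++ n :: b).Nodup) (hb : ∀ x ∈ b, x < n) : List.Chain' (· < ·) b := by
  rw [List.Chain', List.isChain_iff_pairwise]
  by_contra hp
  rw [List.pairwise_iff_get] at hp
  push_neg at hp
  obtain ⟨i, j, hij, hnot⟩ := hp
  have hne : b.get i ≠ b.get j := by
    intro he
    have : b.Nodup := by
      have := (List.nodup_append.1 hnd).2.1
      exact (List.nodup_cons.1 this).2
    exact absurd (List.nodup_iff_injective_get.1 this he) (by
      intro hh
      exact absurd hh (by simp [Fin.ext_iff]; omega))
  have hlt : b.get j < b.get i := by omega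
  have hsub : [n, b.get i, b.get j] <+ a ++ n :: b := by
    have hpair : [b.get i, b.get j] <+ b :=
      pair_sublist b i j _ _ hij (List.getElem?_eq_getElem i.2) (List.getElem?_eq_getElem j.2)
    exact (hpair.cons₂ n).trans (sublist_append_right a (n :: b))
  exact hav n (b.get i) (b.get j) hsub (hb _ (b.get_mem _)) hlt

lemma statGe_of_chain_suffix {b L : List ℕ} {m : ℕ} (hs : b <:+ L)
    (hc : List.Chain' (· < ·) b) (hm : m ≤ b.length) : StatGe m L :=
  ⟨b.drop (b.length - m), (drop_suffix _ _).trans hs, by rw [List.length_drop]; omega,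
    chain'_of_suffix hc (drop_suffix _ _)⟩

lemma statGe_gt_b {n m : ℕ} {a b : List ℕ} (hb : ∀ x ∈ b, x < n)
    (h : StatGe m (a ++ n :: b)) (hm : b.length < m) :
    b = [] ∧ StatGe (m - 1) a := by
  obtain ⟨c, hc, hclen, hchain⟩ := h
  have htot : (a ++ n :: b).length = a.length + b.length + 1 := by
    simp [Nat.add_assoc]
  have hmle : m ≤ a.length + b.length + 1 := by
    have := hc.length_le
    omega
  set k := (a ++ n :: b).length - c.length with hk_def
  have hcd : c = (a ++ n :: b).drop k := suffix_eq_drop hc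
  have hk : k ≤ a.length := by
    rw [hk_def, htot, hclen]
    omega
  have hsplit : (a ++ n :: b).drop k = (a.drop k ++ [n]) ++ b := by
    have h1 : a ++ n :: b = (a ++ [n]) ++ b := by simp
    rw [h1, drop_append_of_le_length (by simp; omega),
      drop_append_of_le_length (by omega)]
  rw [hsplit] at hcd
  have hbnil : b = [] := by
    cases hb' : b with
    | nil => rfl
    | cons y b' =>
      exfalso
      rw [hb'] at hcd
      rw [hcd, List.Chain', List.isChain_append] at hchain
      have hadj := hchain.2.2 n (by simp) y (by simp)
      exact absurd hadj (by have := hb y (by simp [hb']); omega)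
  subst hbnil
  refine ⟨rfl, ?_⟩
  have hchain' : List.Chain' (· < ·) (a.drop k) := by
    rw [hcd, List.append_nil, List.Chain', List.isChain_append] at hchain
    exact hchain.1
  refine ⟨a.drop k, drop_suffix _ _, ?_, hchain'⟩
  have : c.length = (a.drop k).length + 1 := by
    rw [hcd]; simp
  rw [List.length_drop] at this ⊢
  omega

lemma statGe_append_n {n m : ℕ} {a : List ℕ} (h : StatGe m a) (ha : ∀ x ∈ a, x < n) :
    StatGe (m + 1) (a ++ [n]) := by
  obtain ⟨c, hc, hlen, hchain⟩ := h
  refine ⟨c ++ [n], ?_, by simp [hlen], ?_⟩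
  · obtain ⟨p, hp⟩ := hc
    exact ⟨p, by rw [← List.append_assoc, hp]⟩
  · rw [List.Chain', List.isChain_append]
    refine ⟨hchain, List.isChain_singleton n, ?_⟩
    intro x hx y hy
    simp only [List.head?_cons, Option.mem_def, Option.some_inj] at hy
    subst hy
    exact ha x (hc.sublist.subset (List.mem_of_mem_getLast? hx))

lemma av_insert {n : ℕ} {a b : List ℕ} (hav : Av (a ++ b)) (haln : ∀ x ∈ a, x < n)
    (hbln : ∀ x ∈ b, x < n) (hchain : List.Chain' (· < ·) b) : Av (a ++ n :: b) := by
  intro x y z hs h1 h2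
  have hna : n ∉ a := fun hm => lt_irrefl n (haln n hm)
  by_cases hxn : n ∈ [x, y, z]
  · have hle : ∀ w, w ∈ a ++ n :: b → w ≤ n := by
      intro w hw
      rcases List.mem_append.1 hw with h' | h'
      · exact le_of_lt (haln w h')
      · rcases List.mem_cons.1 h' with rfl | h''
        · exact le_refl w
        · exact le_of_lt (hbln w h'')
    have hxm := hle x (hs.subset (by simp))
    have hym := hle y (hs.subset (by simp))
    have hxen : x = n := by
      simp only [List.mem_cons, List.not_mem_nil, or_false] at hxn
      rcases hxn with rfl | rfl | rfl
      · rfl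
      · omega
      · omega
    subst hxen
    have hyz : [y, z] <+ b := sublist_after x a hna hs
    have hpw := (List.isChain_iff_pairwise.1 hchain).sublist hyz
    have : y < z := by
      simpa using hpw
    omega
  · have h3 : [x, y, z] <+ a ++ b := by
      have := hs.erase n
      rwa [erase_of_not_mem hxn, erase_append_right _ hna, erase_cons_head] at this
    exact hav x y z h3 h1 h2

lemma insertIdx_take_drop (x : ℕ) : ∀ (k : ℕ) (l : List ℕ), k ≤ l.length →
    l.insertIdx k x = l.take k ++ x :: l.drop k := by
  intro k
  induction k with
  | zero => intro l _; simp
  | succ k ih =>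
    intro l hk
    cases l with
    | nil => simp at hk
    | cons h t =>
      rw [List.insertIdx_succ_cons, ih t (by simpa using hk)]
      simp

lemma cnt_succ (n j : ℕ) (hj : 1 ≤ j) : cnt (n + 1) j = S n (j - 1) := by
  classical
  unfold cnt S
  refine Finset.card_bij' (fun l _ => l.erase n)
    (fun l' _ => if StatGe j l' then l'.insertIdx (l'.length - j) n else l' ++ [n])
    ?_ ?_ ?_ ?_
  · -- forward well-defined
    intro l hl
    rw [Finset.mem_filter] at hl
    obtain ⟨hA, hstat, hnstat⟩ := hl
    obtain ⟨a, b, rfl, hna, hnb, haln, hbln⟩ := decomp_of_mem_A_succ hA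
    have hav : Av (a ++ n :: b) := (mem_A.1 hA).2
    have hchain : List.Chain' (· < ·) b := chain'_b_of_av hav (nodup_of_mem_A hA) hbln
    have herase : (a ++ n :: b).erase n = a ++ b := by
      rw [erase_append_right _ hna, erase_cons_head]
    rw [Finset.mem_filter, herase]
    constructor
    · rw [mem_A]
      exact ⟨(perm_decomp_iff a b).1 (mem_A.1 hA).1,
        hav.sublist ((List.sublist_cons_self n b).append_left a)⟩
    · by_cases hble : j ≤ b.length
      · exact statGe_of_chain_suffix (List.suffix_append a b) hchain (by omega)
      · obtain ⟨hbe, hsa⟩ := statGe_gt_b hbln hstat (by omega)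
        subst hbe
        simpa using hsa
  · -- backward well-defined
    intro l' hl'
    rw [Finset.mem_filter] at hl'
    obtain ⟨hA', hstat'⟩ := hl'
    have hperm' := (mem_A.1 hA').1
    have hav' := (mem_A.1 hA').2
    have hlt' : ∀ x ∈ l', x < n := fun x hx => (mem_iff_of_mem_A hA').1 hx
    have hnl' : n ∉ l' := fun h => lt_irrefl n (hlt' n h)
    by_cases h : StatGe j l'
    · rw [if_pos h]
      have hjlen : j ≤ l'.length := h.length_le
      have himg : l'.insertIdx (l'.length - j) n =
          l'.take (l'.length - j) ++ n :: l'.drop (l'.length - j) :=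
        insertIdx_take_drop n _ l' (by omega)
      set a := l'.take (l'.length - j) with ha_def
      set b := l'.drop (l'.length - j) with hb_def
      have hab : a ++ b = l' := List.take_append_drop _ _
      have hblen : b.length = j := by rw [hb_def, List.length_drop]; omega
      have hbchain : List.Chain' (· < ·) b := by
        obtain ⟨c, hc, hclen, hcchain⟩ := h
        have hcb : c = b := by rw [suffix_eq_drop hc, hclen]
        rwa [← hcb]
      have hasub : ∀ x ∈ a, x < n := fun x hx => hlt' x (by rw [← hab]; exact List.mem_append_left _ hx)
      have hbsub : ∀ x ∈ b, x < n := fun x hx => hlt' x (by rw [← hab]; exact List.mem_append_right _ hx)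
      rw [himg, Finset.mem_filter]
      refine ⟨?_, ?_, ?_⟩
      · rw [mem_A]
        refine ⟨(perm_decomp_iff a b).2 (by rw [hab]; exact hperm'), ?_⟩
        exact av_insert (by rw [hab]; exact hav') hasub hbsub hbchain
      · exact statGe_of_chain_suffix ⟨a ++ [n], by simp⟩ hbchain (le_of_eq hblen.symm)
      · intro hcon
        have hbne : b ≠ [] := by
          intro e
          rw [e] at hblen
          simp at hblen
          omega
        obtain ⟨he, -⟩ := statGe_gt_b hbsub hcon (by rw [hblen]; omega)
        exact hbne he
    · rw [if_neg h]
      have hstat1 : StatGe (j - 1) l' := hstat'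
      rw [Finset.mem_filter]
      have himg : l' ++ [n] = l' ++ n :: [] := rfl
      refine ⟨?_, ?_, ?_⟩
      · rw [mem_A, himg]
        exact ⟨(perm_decomp_iff l' []).2 (by simpa using hperm'),
          av_insert (by simpa using hav') hlt' (by simp) List.isChain_nil⟩
      · have := statGe_append_n hstat1 hlt'
        rwa [show j - 1 + 1 = j from by omega] at this
      · intro hcon
        rw [himg] at hcon
        obtain ⟨-, hsa⟩ := statGe_gt_b (by simp) hcon (by simp)
        rw [show j + 1 - 1 = j from by omega] at hsa
        exact h hsa
  · -- left inverse
    intro l hl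
    rw [Finset.mem_filter] at hl
    obtain ⟨hA, hstat, hnstat⟩ := hl
    obtain ⟨a, b, rfl, hna, hnb, haln, hbln⟩ := decomp_of_mem_A_succ hA
    have hav : Av (a ++ n :: b) := (mem_A.1 hA).2
    have hchain : List.Chain' (· < ·) b := chain'_b_of_av hav (nodup_of_mem_A hA) hbln
    have herase : (a ++ n :: b).erase n = a ++ b := by
      rw [erase_append_right _ hna, erase_cons_head]
    rw [herase]
    by_cases hbnil : b = []
    · subst hbnil
      simp only [List.append_nil]
      have hnsa : ¬ StatGe j a := by
        intro hs
        have := statGe_append_n hs haln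
        exact hnstat (by simpa using this)
      rw [if_neg hnsa]
    · have hble : j ≤ b.length := by
        by_contra hh
        obtain ⟨he, -⟩ := statGe_gt_b hbln hstat (by omega)
        exact hbnil he
      have hble2 : b.length ≤ j := by
        by_contra hh
        exact hnstat (statGe_of_chain_suffix ⟨a ++ [n], by simp⟩ hchain (by omega))
      have hblen : b.length = j := by omega
      have hsa : StatGe j (a ++ b) := statGe_of_chain_suffix (List.suffix_append a b) hchain (le_of_eq hblen.symm)
      rw [if_pos hsa]
      have hidx : (a ++ b).length - j = a.length := by
        rw [List.length_append]
        omega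
      rw [hidx]
      exact insertIdx_append_cons n a b
  · -- right inverse
    intro l' hl'
    rw [Finset.mem_filter] at hl'
    obtain ⟨hA', -⟩ := hl'
    have hlt' : ∀ x ∈ l', x < n := fun x hx => (mem_iff_of_mem_A hA').1 hx
    have hnl' : n ∉ l' := fun h => lt_irrefl n (hlt' n h)
    by_cases h : StatGe j l'
    · rw [if_pos h]
      have hjlen : j ≤ l'.length := h.length_le
      have himg : l'.insertIdx (l'.length - j) n =
          l'.take (l'.length - j) ++ n :: l'.drop (l'.length - j) :=
        insertIdx_take_drop n _ l' (by omega)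
      rw [himg, erase_append_right _ (fun hm => hnl' (List.mem_of_mem_take hm)),
        erase_cons_head]
      exact List.take_append_drop _ _
    · rw [if_neg h, erase_append_right _ hnl', erase_cons_head]
      simp

lemma av_nil : Av [] := by
  intro x y z h _ _
  simp at h

lemma S_eq_zero {n m : ℕ} (h : n < m) : S n m = 0 := by
  classical
  unfold S
  rw [Finset.card_eq_zero, Finset.filter_eq_empty_iff]
  intro l hl
  intro hs
  have := hs.length_le
  rw [length_of_mem_A hl] at this
  omega

lemma S_step (n m : ℕ) : S n m = S n (m + 1) + cnt n m := by
  classical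
  unfold S cnt
  have key := Finset.card_filter_add_card_filter_not
    (s := (A n).filter (StatGe m)) (p := StatGe (m + 1))
  rw [Finset.filter_filter, Finset.filter_filter] at key
  have e1 : (A n).filter (fun a => StatGe m a ∧ StatGe (m + 1) a) =
      (A n).filter (StatGe (m + 1)) := by
    apply Finset.filter_congr
    intro l _
    constructor
    · exact fun h => h.2
    · exact fun h => ⟨h.mono (by omega), h⟩
  rw [e1] at key
  omega

lemma sum_Icc_bottom {a b : ℕ} (h : a ≤ b) (f : ℕ → ℕ) :
    ∑ t ∈ Finset.Icc a b, f t = f a + ∑ t ∈ Finset.Icc (a + 1) b, f t := by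
  have he : Finset.Icc a b = insert a (Finset.Icc (a + 1) b) := by
    ext x
    simp only [Finset.mem_Icc, Finset.mem_insert]
    omega
  rw [he, Finset.sum_insert (by simp only [Finset.mem_Icc]; omega)]

lemma S_succ_rec (n : ℕ) : ∀ m, 1 ≤ m → S (n + 1) m = ∑ t ∈ Finset.Icc (m - 1) n, S n t := by
  have key : ∀ d m, n + 2 ≤ m + d → 1 ≤ m →
      S (n + 1) m = ∑ t ∈ Finset.Icc (m - 1) n, S n t := by
    intro d
    induction d with
    | zero =>
      intro m hm h1
      rw [S_eq_zero (by omega), Finset.Icc_eq_empty (by omega), Finset.sum_empty]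
    | succ d ih =>
      intro m hm h1
      by_cases hle : n + 2 ≤ m
      · rw [S_eq_zero (by omega), Finset.Icc_eq_empty (by omega), Finset.sum_empty]
      · rw [S_step (n + 1) m, cnt_succ n m h1, ih (m + 1) (by omega) (by omega)]
        rw [sum_Icc_bottom (show m - 1 ≤ n by omega)]
        rw [show m + 1 - 1 = (m - 1) + 1 from by omega]
        exact Nat.add_comm _ _
  intro m h1
  exact key (n + 2) m (by omega) h1

lemma S_zero_eq_one (n : ℕ) : S (n + 1) 0 = S (n + 1) 1 := by
  classical
  unfold S
  congr 1
  apply Finset.filter_congr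
  intro l hl
  have hne : l ≠ [] := by
    intro e
    have := length_of_mem_A hl
    rw [e] at this
    simp at this
  simp only [iff_true_intro (statGe_zero l), iff_true_intro (statGe_one hne)]

def T : ℕ → ℕ → ℕ
  | 0, m => if m = 0 then 1 else 0
  | n + 1, m => ∑ t ∈ Finset.Icc (m - 1) n, T n t

lemma A_zero : A 0 = {[]} := by
  classical
  ext l
  rw [mem_A]
  simp only [List.range_zero, Finset.mem_singleton]
  constructor
  · rintro ⟨h, -⟩
    exact List.Perm.eq_nil h
  · rintro rfl
    exact ⟨List.Perm.refl _, av_nil⟩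

lemma S_zero (m : ℕ) : S 0 m = if m = 0 then 1 else 0 := by
  classical
  unfold S
  rw [A_zero]
  by_cases hm : m = 0
  · subst hm
    rw [if_pos rfl]
    rw [Finset.filter_singleton, if_pos (statGe_zero [])]
    rfl
  · rw [if_neg hm, Finset.filter_singleton, if_neg, Finset.card_empty]
    intro hs
    have := hs.length_le
    simp at this
    omega

lemma S_eq_T : ∀ n m, S n m = T n m := by
  intro n
  induction n with
  | zero => intro m; rw [S_zero]; rfl
  | succ n ih =>
    intro m
    by_cases hm : 1 ≤ m
    · rw [S_succ_rec n m hm, show T (n + 1) m = ∑ t ∈ Finset.Icc (m - 1) n, T n t from rfl]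
      exact Finset.sum_congr rfl fun t _ => ih t
    · have hm0 : m = 0 := by omega
      subst hm0
      rw [S_zero_eq_one n, S_succ_rec n 1 le_rfl,
        show T (n + 1) 0 = ∑ t ∈ Finset.Icc (1 - 1) n, T n t from rfl]
      exact Finset.sum_congr rfl fun t _ => ih t

lemma T_vanish : ∀ n t, n < t → T n t = 0 := by
  intro n
  induction n with
  | zero => intro t ht; simp [T]; omega
  | succ n ih =>
    intro t ht
    rw [show T (n + 1) t = ∑ s ∈ Finset.Icc (t - 1) n, T n s from rfl,
      Finset.Icc_eq_empty (by omega), Finset.sum_empty]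

lemma sum_Icc_shift (f : ℕ → ℕ) {a b : ℕ} (ha : 1 ≤ a) (hb : 1 ≤ b) :
    ∑ t ∈ Finset.Icc a b, f (t - 1) = ∑ s ∈ Finset.Icc (a - 1) (b - 1), f s := by
  refine Finset.sum_bij' (fun t _ => t - 1) (fun s _ => s + 1) ?_ ?_ ?_ ?_ ?_
  · intro t ht
    simp only [Finset.mem_Icc] at ht ⊢
    omega
  · intro s hs
    simp only [Finset.mem_Icc] at hs ⊢
    omega
  · intro t ht
    simp only [Finset.mem_Icc] at ht
    omega
  · intro s hs
    simp only [Finset.mem_Icc] at hs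
    omega
  · intro t ht
    rfl

lemma sum_Icc_truncate (f : ℕ → ℕ) {a b c : ℕ} (hbc : b ≤ c)
    (hf : ∀ s, b < s → f s = 0) :
    ∑ s ∈ Finset.Icc a c, f s = ∑ s ∈ Finset.Icc a b, f s := by
  symm
  apply Finset.sum_subset
  · apply Finset.Icc_subset_Icc le_rfl hbc
  · intro x hx hnx
    simp only [Finset.mem_Icc] at hx hnx
    exact hf x (by omega)

lemma T_catalan : ∀ n : ℕ, (T n 0 = catalan n) ∧
    (∀ m, 1 ≤ m → T n m = ∑ i ∈ Finset.range n, catalan i * T (n - 1 - i) (m - 1)) := by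
  intro n
  induction n using Nat.strong_induction_on with
  | _ n ih =>
    match n with
    | 0 =>
      constructor
      · simp [T, catalan_zero]
      · intro m hm
        rw [show T 0 m = if m = 0 then 1 else 0 from rfl, if_neg (by omega)]
        simp
    | (n + 1) =>
      have part2 : ∀ m, 1 ≤ m →
          T (n + 1) m = ∑ i ∈ Finset.range (n + 1), catalan i * T (n - i) (m - 1) := by
        intro m hm
        by_cases hm2 : 2 ≤ m
        · rw [show T (n + 1) m = ∑ t ∈ Finset.Icc (m - 1) n, T n t from rfl]
          rw [Finset.sum_congr rfl (fun t ht => (ih n (Nat.lt_succ_self n)).2 t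
            (by simp only [Finset.mem_Icc] at ht; omega))]
          rw [Finset.sum_comm]
          rw [Finset.sum_congr rfl (fun i _ => (Finset.mul_sum _ _ _).symm)]
          have inner : ∀ i ∈ Finset.range n,
              ∑ t ∈ Finset.Icc (m - 1) n, T (n - 1 - i) (t - 1) = T (n - i) (m - 1) := by
            intro i hi
            rw [Finset.mem_range] at hi
            rw [sum_Icc_shift _ (by omega) (by omega)]
            rw [sum_Icc_truncate _ (show n - 1 - i ≤ n - 1 by omega)
              (fun s hs => T_vanish _ _ (by omega))]
            rw [show n - i = (n - 1 - i) + 1 from by omega]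
            rfl
          rw [Finset.sum_congr rfl (fun i hi => by rw [inner i hi])]
          rw [Finset.sum_range_succ, show n - n = 0 from by omega, T_vanish 0 (m - 1) (by omega), Nat.mul_zero, Nat.add_zero]
        · have hm1 : m = 1 := by omega
          subst hm1
          rw [show T (n + 1) 1 = ∑ t ∈ Finset.Icc 0 n, T n t from rfl]
          rw [sum_Icc_bottom (Nat.zero_le n)]
          rw [Finset.sum_congr rfl (fun t ht => (ih n (Nat.lt_succ_self n)).2 t
            (by simp only [Finset.mem_Icc] at ht; omega))]
          rw [Finset.sum_comm]
          rw [Finset.sum_congr rfl (fun i _ => (Finset.mul_sum _ _ _).symm)]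
          have inner : ∀ i ∈ Finset.range n,
              ∑ t ∈ Finset.Icc 1 n, T (n - 1 - i) (t - 1) = T (n - i) 0 := by
            intro i hi
            rw [Finset.mem_range] at hi
            rw [sum_Icc_shift _ le_rfl (by omega)]
            rw [sum_Icc_truncate _ (show n - 1 - i ≤ n - 1 by omega)
              (fun s hs => T_vanish _ _ (by omega))]
            rw [show n - i = (n - 1 - i) + 1 from by omega]
            rfl
          rw [Finset.sum_congr rfl (fun i hi => by rw [inner i hi])]
          rw [Finset.sum_range_succ, show n - n = 0 from by omega,
            show T 0 (1 - 1) = 1 from rfl, Nat.mul_one]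
          rw [(ih n (Nat.lt_succ_self n)).1]
          exact Nat.add_comm _ _
      constructor
      · have h0 : T (n + 1) 0 = T (n + 1) 1 := rfl
        rw [h0, part2 1 le_rfl]
        rw [catalan_succ']
        rw [Finset.Nat.sum_antidiagonal_eq_sum_range_succ_mk]
        exact Finset.sum_congr rfl (fun i hi => by
          rw [Finset.mem_range] at hi
          rw [(ih (n - i) (by omega)).1])
      · exact part2

noncomputable def permOfList {n : ℕ} (l : List ℕ) (hlen : l.length = n) (hnd : l.Nodup)
    (hmem : ∀ x ∈ l, x < n) : Equiv.Perm (Fin n) :=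
  Equiv.ofBijective (fun i => (⟨l.get (Fin.cast hlen.symm i), hmem _ (l.get_mem _)⟩ : Fin n))
    (by
      have hinj : Function.Injective
          (fun i : Fin n => (⟨l.get (Fin.cast hlen.symm i), hmem _ (l.get_mem _)⟩ : Fin n)) := by
        intro i j hij
        simp only [Fin.mk.injEq] at hij
        have := List.nodup_iff_injective_get.1 hnd hij
        simpa [Fin.ext_iff] using this
      exact Finite.injective_iff_bijective.1 hinj)

lemma coe_permOfList {n : ℕ} (l : List ℕ) (hlen : l.length = n) (hnd : l.Nodup)
    (hmem : ∀ x ∈ l, x < n) (i : Fin n) :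
    (permOfList l hlen hnd hmem i : ℕ) = l.get (Fin.cast hlen.symm i) := rfl

lemma ofFn_permOfList {n : ℕ} (l : List ℕ) (hlen : l.length = n) (hnd : l.Nodup)
    (hmem : ∀ x ∈ l, x < n) :
    List.ofFn (fun i => (permOfList l hlen hnd hmem i : ℕ)) = l := by
  apply List.ext_get (by simp [hlen])
  intro i h1 h2
  rw [List.get_ofFn]
  rw [coe_permOfList]
  congr 1

lemma card_A (n : ℕ) :
    Fintype.card {σ : Equiv.Perm (Fin n) //
      ¬ ∃ i j k : Fin n, i < j ∧ j < k ∧ σ j < σ i ∧ σ k < σ j} = (A n).card := by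
  classical
  rw [Fintype.card_subtype]
  refine Finset.card_bij' (fun σ _ => List.ofFn (fun i => (σ i : ℕ)))
    (fun l hl => permOfList l (length_of_mem_A hl) (nodup_of_mem_A hl)
      (fun x hx => (mem_iff_of_mem_A hl).1 hx)) ?_ ?_ ?_ ?_
  · intro σ hσ
    rw [Finset.mem_filter] at hσ
    rw [mem_A]
    constructor
    · apply List.perm_of_nodup_nodup_toFinset_eq
      · rw [List.nodup_ofFn]
        exact Fin.val_injective.comp σ.injective
      · exact List.nodup_range
      · ext x
        simp only [List.mem_toFinset, List.mem_ofFn, Set.mem_range, List.mem_range]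
        constructor
        · rintro ⟨i, rfl⟩
          exact (σ i).isLt
        · intro hx
          exact ⟨σ.symm ⟨x, hx⟩, by simp⟩
    · exact (av_ofFn_iff σ).2 hσ.2
  · intro l hl
    rw [Finset.mem_filter]
    refine ⟨Finset.mem_univ _, ?_⟩
    rw [← av_ofFn_iff]
    rw [ofFn_permOfList]
    exact (mem_A.1 hl).2
  · intro σ hσ
    apply Equiv.ext
    intro i
    apply Fin.ext
    rw [coe_permOfList, List.get_ofFn]
    exact congrArg (fun x => (σ x : ℕ)) (Fin.ext rfl)
  · intro l hl
    exact ofFn_permOfList _ _ _ _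

lemma card_A_eq_S (n : ℕ) : (A n).card = S n 0 := by
  classical
  unfold S
  rw [Finset.filter_true_of_mem (fun l _ => statGe_zero l)]

end ThreeGood

/-- The number of permutations of `Sₙ` with no decreasing subsequence of length 3
(the 3-good permutations) is the `n`-th Catalan number. -/
theorem card_threeGood_eq_catalan (n : ℕ) :
    Fintype.card
      {σ : Equiv.Perm (Fin n) //
        ¬ ∃ i j k : Fin n, i < j ∧ j < k ∧ σ j < σ i ∧ σ k < σ j} = catalan n := by
  rw [ThreeGood.card_A, ThreeGood.card_A_eq_S, ThreeGood.S_eq_T]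
  exact (ThreeGood.T_catalan n).1
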